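/- Let r ≥ 0 and let G_1,…,G_N ∈ S = ℝ[x,y,z] be homogeneous forms of degrees n_1,…,n_N, each lying in ⟨x,y⟩, with nonzero linear parts L_1,…,L_N ∈ ℝ[x,y] at [0:0:1]. Suppose that the ideal I := ⟨L_1^{r+1},…,L_N^{r+1}⟩ is minimally generated by t of the powers L_i^{r+1} and that 2t ≥ r + 3. Then G_i^{r+1} ∈ I for every i; that is, ⟨G_1^{r+1},…,G_N^{r+1}⟩ ⊆ I. -/

import Mathlib

/-!
Statement 8: with `G i` homogeneous of degree `n i`, lying in `⟨x,y⟩`, with nonzero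
linear parts `L i` at `[0:0:1]`, if `I = ⟨L i ^ (r+1)⟩` is minimally generated by `t`
of those powers (expressed as `dim_ℝ (I/mI) = t`) and `2t ≥ r + 3`, then
`G i ^ (r+1) ∈ I` for every `i`; that is, `⟨G i ^ (r+1)⟩ ⊆ I`.
-/

open MvPolynomial

noncomputable section

abbrev PS := MvPolynomial (Fin 3) ℝ

/-- The coefficient of `z^c` in `G`, viewed as a polynomial in `z = X 2` with
coefficients in `ℝ[x,y]`. -/
def zCoeff (G : PS) (c : ℕ) : PS :=
  ∑ m ∈ G.support.filter (fun m => m 2 = c),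
    monomial (m - Finsupp.single 2 c) (coeff m G)

/-- `dim_ℝ (I/mI)`, the minimal number of generators of `I`, realized as the dimension
of the image of `I` in `S ⧸ mI` where `m = ⟨x,y,z⟩`. -/
def mingens (I : Ideal PS) : ℕ :=
  Module.finrank ℝ ↥(Submodule.map
    (Ideal.Quotient.mkₐ ℝ ((Ideal.span {X 0, X 1, X 2} : Ideal PS) * I)).toLinearMap
    (Submodule.restrictScalars ℝ (I : Submodule PS PS)))

namespace LowPowersAux

lemma deg3 (d : Fin 3 →₀ ℕ) : d.degree = d 0 + d 1 + d 2 := by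
  rw [Finsupp.degree_apply, Finset.sum_subset (Finset.subset_univ _), Fin.sum_univ_three]
  intro i _ hi; simpa using Finsupp.notMem_support_iff.mp hi

lemma deg3_add (a b : Fin 3 →₀ ℕ) : (a + b).degree = a.degree + b.degree := by
  simp only [deg3, Finsupp.add_apply]; ring

lemma li_no_smul {ι V : Type*} [AddCommGroup V] [Module ℝ V] {f : ι → V}
    (hli : LinearIndependent ℝ f) {i j : ι} (hij : i ≠ j) (d : ℝ) (h : f j = d • f i) :
    False := by
  have h0 : Finsupp.linearCombination ℝ f (Finsupp.single j 1 - Finsupp.single i d) = 0 := by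
    rw [map_sub, Finsupp.linearCombination_single, Finsupp.linearCombination_single, h]
    simp
  have hz := linearIndependent_iff.mp hli _ h0
  have hj := DFunLike.congr_fun hz j
  rw [Finsupp.sub_apply, Finsupp.single_eq_same, Finsupp.single_eq_of_ne' hij] at hj
  simp at hj

lemma coeff_low_zero {ι : Type*} (f : ι → PS) (r : ℕ)
    (hf : ∀ i, (f i).IsHomogeneous (r+1)) {p : PS}
    (hp : p ∈ Ideal.span (Set.range f)) :
    ∀ d : Fin 3 →₀ ℕ, d.degree ≤ r → coeff d p = 0 := by
  refine Submodule.span_induction ?_ ?_ ?_ ?_ hp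
  · rintro _ ⟨i, rfl⟩ d hd
    exact (hf i).coeff_eq_zero (by omega)
  · simp
  · intro a b _ _ iha ihb d hd; simp [iha d hd, ihb d hd]
  · intro a x _ ih d hd
    rw [smul_eq_mul, coeff_mul]
    apply Finset.sum_eq_zero
    rintro ⟨u, v⟩ huv
    rw [Finset.HasAntidiagonal.mem_antidiagonal] at huv
    have hv : v.degree ≤ r := by
      have := deg3_add u v; rw [huv] at this; omega
    rw [ih v hv, mul_zero]

lemma constantCoeff_mem_m {p : PS}
    (hp : p ∈ (Ideal.span {X 0, X 1, X 2} : Ideal PS)) : constantCoeff p = 0 := by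
  refine Submodule.span_induction ?_ ?_ ?_ ?_ hp
  · rintro x hx
    simp only [Set.mem_insert_iff, Set.mem_singleton_iff] at hx
    rcases hx with rfl | rfl | rfl <;> simp
  · simp
  · intro a b _ _ iha ihb; simp [iha, ihb]
  · intro a x _ ih; simp [smul_eq_mul, ih]


lemma coeff_low_zero_mI {ι : Type*} (f : ι → PS) (r : ℕ)
    (hf : ∀ i, (f i).IsHomogeneous (r+1)) {p : PS}
    (hp : p ∈ (Ideal.span {X 0, X 1, X 2} : Ideal PS) * Ideal.span (Set.range f)) :
    ∀ d : Fin 3 →₀ ℕ, d.degree ≤ r + 1 → coeff d p = 0 := by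
  refine Submodule.mul_induction_on hp ?_ ?_
  · intro a ha b hb d hd
    rw [coeff_mul]
    apply Finset.sum_eq_zero
    rintro ⟨u, v⟩ huv
    rw [Finset.HasAntidiagonal.mem_antidiagonal] at huv
    have hdd := deg3_add u v
    rw [huv] at hdd
    by_cases hv : v.degree ≤ r
    · rw [coeff_low_zero f r hf hb v hv, mul_zero]
    · have hu : u.degree = 0 := by omega
      have : u = 0 := (Finsupp.degree_eq_zero_iff u).mp hu
      subst this
      have : coeff 0 a = 0 := constantCoeff_mem_m ha
      rw [this, zero_mul]
  · intro x y ihx ihy d hd; simp [ihx d hd, ihy d hd]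

lemma sub_C_mem_m (a : PS) :
    a - C (constantCoeff a) ∈ (Ideal.span {X 0, X 1, X 2} : Ideal PS) := by
  induction a using MvPolynomial.induction_on with
  | C c => simp
  | add p q hp hq =>
      have : p + q - C (constantCoeff (p + q)) =
          (p - C (constantCoeff p)) + (q - C (constantCoeff q)) := by
        rw [map_add, map_add]; ring
      rw [this]; exact Ideal.add_mem _ hp hq
  | mul_X p i hp =>
      have : p * X i - C (constantCoeff (p * X i)) = p * X i := by
        simp
      rw [this]
      refine Ideal.mul_mem_left _ _ (Ideal.subset_span ?_)
      fin_cases i <;> simp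

lemma expand1 (a b : ℝ) (r : ℕ) :
    (C a * X 0 + C b * X 1 : PS) ^ (r+1) * X 0
      = ∑ j ∈ Finset.range (r+2), (((r+1).choose j : ℝ) * a ^ j * b ^ (r+1-j)) •
          (X 0 ^ (j+1) * X 1 ^ (r+1-j)) := by
  rw [add_pow, Finset.sum_mul]
  refine Finset.sum_congr rfl fun j hj => ?_
  rw [mul_pow, mul_pow, ← C_pow, ← C_pow, MvPolynomial.smul_eq_C_mul,
    map_mul, map_mul, ← C_eq_coe_nat]
  ring

lemma expand2 (a b : ℝ) (r : ℕ) :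
    (C a * X 0 + C b * X 1 : PS) ^ (r+1) * X 1
      = ∑ j ∈ Finset.range (r+2), (((r+1).choose j : ℝ) * a ^ j * b ^ (r+1-j)) •
          (X 0 ^ j * X 1 ^ (r+1-j+1)) := by
  rw [add_pow, Finset.sum_mul]
  refine Finset.sum_congr rfl fun j hj => ?_
  rw [mul_pow, mul_pow, ← C_pow, ← C_pow, MvPolynomial.smul_eq_C_mul,
    map_mul, map_mul, ← C_eq_coe_nat]
  ring

lemma double_root_dvd {q : Polynomial ℝ} {u : ℝ} (h0 : q.eval u = 0)
    (h1 : (Polynomial.derivative q).eval u = 0) :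
    (Polynomial.X - Polynomial.C u) ^ 2 ∣ q := by
  obtain ⟨q1, rfl⟩ := Polynomial.dvd_iff_isRoot.mpr h0
  have h2 : q1.eval u = 0 := by
    rw [Polynomial.derivative_mul] at h1
    simpa using h1
  obtain ⟨q2, rfl⟩ := Polynomial.dvd_iff_isRoot.mpr h2
  exact ⟨q2, by ring⟩

open Polynomial in
lemma q_decomp (r : ℕ) (c : ℕ → ℝ) :
    (∑ k ∈ Finset.range (r+3), Polynomial.monomial k (c k * ((r+2).choose k : ℝ)))
      = (∑ j ∈ Finset.range (r+2), Polynomial.monomial j (((r+1).choose j : ℝ) * c j))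
        + Polynomial.X *
          (∑ j ∈ Finset.range (r+2), Polynomial.monomial j (((r+1).choose j : ℝ) * c (j+1))) := by
  ext n
  rcases n with _ | m
  · simp [Polynomial.finset_sum_coeff, Polynomial.coeff_monomial, Finset.sum_ite_eq',
      Polynomial.mul_coeff_zero]
  · rw [Polynomial.coeff_add, Polynomial.coeff_X_mul]
    simp only [Polynomial.finset_sum_coeff, Polynomial.coeff_monomial, Finset.sum_ite_eq',
      Finset.mem_range]
    by_cases h1 : m + 1 < r + 2
    · rw [if_pos h1, if_pos (by omega : m + 1 < r + 3), if_pos (by omega : m < r + 2)]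
      have hp := Nat.choose_succ_succ (r+1) m
      push_cast [hp]; ring
    · by_cases h2 : m + 1 = r + 2
      · rw [if_neg h1, if_pos (by omega : m + 1 < r + 3), if_pos (by omega : m < r + 2)]
        have hm : m = r + 1 := by omega
        subst hm
        simp
      · rw [if_neg h1, if_neg (by omega : ¬ m + 1 < r + 3), if_neg (by omega : ¬ m < r + 2)]
        ring

open Polynomial in
lemma q_deriv (r : ℕ) (c : ℕ → ℝ) :
    Polynomial.derivative
      (∑ k ∈ Finset.range (r+3), Polynomial.monomial k (c k * ((r+2).choose k : ℝ)))
      = ((r+2 : ℝ)) •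
        (∑ j ∈ Finset.range (r+2), Polynomial.monomial j (((r+1).choose j : ℝ) * c (j+1))) := by
  rw [map_sum, Finset.sum_range_succ' (fun k => Polynomial.derivative (Polynomial.monomial k (c k * ((r+2).choose k : ℝ)))) (r+2), Finset.smul_sum]
  simp only [Polynomial.derivative_monomial, Nat.add_sub_cancel, Nat.cast_zero, mul_zero,
    Polynomial.monomial_zero_right, add_zero, Polynomial.smul_monomial]
  refine Finset.sum_congr rfl fun j hj => ?_
  congr 1
  have h := Nat.add_one_mul_choose_eq (r+1) j
  have : ((r+2).choose (j+1) * (j+1) : ℝ) = ((r+2) * ((r+1).choose j) : ℝ) := by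
    exact_mod_cast h.symm
  rw [smul_eq_mul]
  push_cast
  linear_combination c (j+1) * this

lemma core (r : ℕ) {ι : Type} [Fintype ι] [DecidableEq ι] (a b : ι → ℝ)
    (hne : ∀ i, ¬(a i = 0 ∧ b i = 0))
    (hdet : ∀ i j, i ≠ j → a i * b j ≠ a j * b i)
    (hk : r + 3 ≤ 2 * Fintype.card ι) (α β : ℕ) (hab : α + β = r + 2) :
    (X 0 : PS) ^ α * X 1 ^ β ∈ Submodule.span ℝ
      ((Set.range fun i => (C (a i) * X 0 + C (b i) * X 1 : PS) ^ (r+1) * X 0) ∪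
       (Set.range fun i => (C (a i) * X 0 + C (b i) * X 1 : PS) ^ (r+1) * X 1)) := by
  classical
  by_contra hmem
  obtain ⟨lam, hlam1, hlam2⟩ := Submodule.exists_dual_map_eq_bot_of_notMem hmem
    inferInstance
  have hvanish : ∀ y ∈ Submodule.span ℝ
      ((Set.range fun i => (C (a i) * X 0 + C (b i) * X 1 : PS) ^ (r+1) * X 0) ∪
       (Set.range fun i => (C (a i) * X 0 + C (b i) * X 1 : PS) ^ (r+1) * X 1)), lam y = 0 := by
    intro y hy
    have h := Submodule.mem_map_of_mem (f := lam) hy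
    rwa [hlam2, Submodule.mem_bot] at h
  set c : ℕ → ℝ := fun j => lam (X 0 ^ j * X 1 ^ (r + 2 - j)) with hc
  have E1 : ∀ i, ∑ j ∈ Finset.range (r+2),
      (((r+1).choose j : ℝ) * a i ^ j * b i ^ (r+1-j)) * c (j+1) = 0 := by
    intro i
    have h0 : lam ((C (a i) * X 0 + C (b i) * X 1 : PS) ^ (r+1) * X 0) = 0 :=
      hvanish _ (Submodule.subset_span (Or.inl ⟨i, rfl⟩))
    rw [expand1, map_sum] at h0
    rw [← h0]
    refine Finset.sum_congr rfl fun j hj => ?_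
    rw [map_smul, smul_eq_mul]
    congr 1
    simp only [hc]
    have he : r + 2 - (j + 1) = r + 1 - j := by omega
    rw [he]
  have E2 : ∀ i, ∑ j ∈ Finset.range (r+2),
      (((r+1).choose j : ℝ) * a i ^ j * b i ^ (r+1-j)) * c j = 0 := by
    intro i
    have h0 : lam ((C (a i) * X 0 + C (b i) * X 1 : PS) ^ (r+1) * X 1) = 0 :=
      hvanish _ (Submodule.subset_span (Or.inr ⟨i, rfl⟩))
    rw [expand2, map_sum] at h0
    rw [← h0]
    refine Finset.sum_congr rfl fun j hj => ?_
    rw [map_smul, smul_eq_mul]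
    congr 1
    simp only [hc]
    rw [Finset.mem_range] at hj
    have he : r + 1 - j + 1 = r + 2 - j := by omega
    rw [he]
  set A : Polynomial ℝ :=
    ∑ j ∈ Finset.range (r+2), Polynomial.monomial j (((r+1).choose j : ℝ) * c (j+1)) with hA
  set B : Polynomial ℝ :=
    ∑ j ∈ Finset.range (r+2), Polynomial.monomial j (((r+1).choose j : ℝ) * c j) with hB
  set q : Polynomial ℝ :=
    ∑ m ∈ Finset.range (r+3), Polynomial.monomial m (c m * ((r+2).choose m : ℝ)) with hq
  have hqAB : q = B + Polynomial.X * A := q_decomp r c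
  have hqd : Polynomial.derivative q = ((r+2:ℝ)) • A := q_deriv r c
  have hcoeffq : ∀ m, q.coeff m = if m < r+3 then c m * ((r+2).choose m : ℝ) else 0 := by
    intro m
    rw [hq, Polynomial.finset_sum_coeff]
    simp [Polynomial.coeff_monomial, Finset.sum_ite_eq', Finset.mem_range]
  have hAeval : ∀ u : ℝ, A.eval u
      = ∑ j ∈ Finset.range (r+2), (((r+1).choose j : ℝ) * c (j+1)) * u ^ j := by
    intro u; rw [hA, Polynomial.eval_finset_sum]
    simp [Polynomial.eval_monomial]
  have hBeval : ∀ u : ℝ, B.eval u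
      = ∑ j ∈ Finset.range (r+2), (((r+1).choose j : ℝ) * c j) * u ^ j := by
    intro u; rw [hB, Polynomial.eval_finset_sum]
    simp [Polynomial.eval_monomial]
  have hroots : ∀ i, b i ≠ 0 → A.eval (a i / b i) = 0 ∧ B.eval (a i / b i) = 0 := by
    intro i hb
    have key : ∀ g : ℕ → ℝ, b i ^ (r+1) *
        (∑ j ∈ Finset.range (r+2), (((r+1).choose j : ℝ) * g j) * (a i / b i) ^ j)
        = ∑ j ∈ Finset.range (r+2), (((r+1).choose j : ℝ) * a i ^ j * b i ^ (r+1-j)) * g j := by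
      intro g
      rw [Finset.mul_sum]
      refine Finset.sum_congr rfl fun j hj => ?_
      rw [Finset.mem_range] at hj
      have hbj : b i ^ (r+1) = b i ^ j * b i ^ (r+1-j) := by
        rw [← pow_add]; congr 1; omega
      rw [div_pow, hbj]
      field_simp
    have hbne : b i ^ (r+1) ≠ 0 := pow_ne_zero _ hb
    constructor
    · have h1 := key (fun j => c (j+1))
      rw [hAeval]
      have h2 : b i ^ (r+1) * A.eval (a i / b i) = 0 := by
        rw [hAeval, h1]; exact E1 i
      rw [hAeval] at h2
      exact (mul_eq_zero.mp h2).resolve_left hbne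
    · have h1 := key c
      rw [hBeval]
      have h2 : b i ^ (r+1) * B.eval (a i / b i) = 0 := by
        rw [hBeval, h1]; exact E2 i
      rw [hBeval] at h2
      exact (mul_eq_zero.mp h2).resolve_left hbne
  have hq0 : ∀ i, b i ≠ 0 → q.eval (a i / b i) = 0 ∧
      (Polynomial.derivative q).eval (a i / b i) = 0 := by
    intro i hb
    obtain ⟨hA0, hB0⟩ := hroots i hb
    constructor
    · rw [hqAB]; simp [hA0, hB0]
    · rw [hqd]; simp [hA0]
  have hspecial : ∀ i, b i = 0 → c (r+1) = 0 ∧ c (r+2) = 0 := by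
    intro i hb
    have ha : a i ≠ 0 := fun h => hne i ⟨h, hb⟩
    have hterm : ∀ g : ℕ → ℝ, ∑ j ∈ Finset.range (r+2),
        (((r+1).choose j : ℝ) * a i ^ j * b i ^ (r+1-j)) * g j = a i ^ (r+1) * g (r+1) := by
      intro g
      rw [Finset.sum_eq_single_of_mem (r+1) (Finset.self_mem_range_succ (r+1))]
      · simp [hb]
      · intro j hj hjne
        rw [Finset.mem_range] at hj
        rw [hb, zero_pow (by omega : r+1-j ≠ 0)]
        ring
    constructor
    · have := E2 i; rw [hterm c] at this
      exact (mul_eq_zero.mp this).resolve_left (pow_ne_zero _ ha)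
    · have := E1 i; rw [hterm (fun j => c (j+1))] at this
      exact (mul_eq_zero.mp this).resolve_left (pow_ne_zero _ ha)
  set S : Finset ι := Finset.univ.filter (fun i => b i ≠ 0) with hS
  have hmemS : ∀ i, i ∈ S ↔ b i ≠ 0 := by
    intro i; simp [hS]
  have hdvd : (∏ i ∈ S, (Polynomial.X - Polynomial.C (a i / b i)) ^ 2) ∣ q := by
    refine Finset.prod_dvd_of_coprime ?_ ?_
    · intro i hi j hj hij
      have hbi : b i ≠ 0 := (hmemS i).mp (Finset.mem_coe.mp hi)
      have hbj : b j ≠ 0 := (hmemS j).mp (Finset.mem_coe.mp hj)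
      have hu : a i / b i ≠ a j / b j := by
        intro h
        exact hdet i j hij ((div_eq_div_iff hbi hbj).mp h)
      exact (Polynomial.isCoprime_X_sub_C_of_isUnit_sub
        ((sub_ne_zero.mpr hu).isUnit)).pow
    · intro i hi
      have hbi : b i ≠ 0 := (hmemS i).mp hi
      exact double_root_dvd (hq0 i hbi).1 (hq0 i hbi).2
  have hqdeg : q.natDegree ≤ r + 2 := by
    rw [hq]
    refine Polynomial.natDegree_sum_le_of_forall_le _ _ (fun j hj => ?_)
    refine le_trans (Polynomial.natDegree_monomial_le _) ?_
    rw [Finset.mem_range] at hj; omega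
  have hPdeg : (∏ i ∈ S, (Polynomial.X - Polynomial.C (a i / b i)) ^ 2).natDegree
      = 2 * S.card := by
    rw [Polynomial.natDegree_prod _ _
      (fun i _ => pow_ne_zero _ (Polynomial.X_sub_C_ne_zero _))]
    simp [Polynomial.natDegree_pow, Polynomial.natDegree_X_sub_C, mul_comm]
  have hq_zero : q = 0 := by
    by_contra hqne
    have hle := Polynomial.natDegree_le_of_dvd hdvd hqne
    rw [hPdeg] at hle
    by_cases hall : ∀ i, b i ≠ 0
    · have hcard : S.card = Fintype.card ι := by
        rw [hS, Finset.filter_true_of_mem (fun i _ => hall i), Finset.card_univ]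
      omega
    · push_neg at hall
      obtain ⟨i0, hb0⟩ := hall
      have huniq : ∀ j, j ≠ i0 → b j ≠ 0 := by
        intro j hj hbj
        exact hdet i0 j (fun h => hj h.symm) (by rw [hb0, hbj]; ring)
      have hScard : S.card = Fintype.card ι - 1 := by
        have hSe : S = Finset.univ.erase i0 := by
          ext j
          simp only [hmemS, Finset.mem_erase, Finset.mem_univ, and_true]
          constructor
          · intro h hji; exact h (hji ▸ hb0)
          · intro h; exact huniq j h
        rw [hSe, Finset.card_erase_of_mem (Finset.mem_univ _), Finset.card_univ]
      obtain ⟨hc1, hc2⟩ := hspecial i0 hb0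
      have hdeg_r : q.natDegree ≤ r := by
        rw [Polynomial.natDegree_le_iff_coeff_eq_zero]
        intro m hm
        rw [hcoeffq m]
        split
        · rename_i hmlt
          have : m = r + 1 ∨ m = r + 2 := by omega
          rcases this with rfl | rfl
          · rw [hc1]; ring
          · rw [hc2]; ring
        · rfl
      omega
  have hcz : ∀ j, j ≤ r + 2 → c j = 0 := by
    intro j hj
    have h1 : q.coeff j = 0 := by rw [hq_zero]; simp
    rw [hcoeffq j, if_pos (by omega)] at h1
    have h2 : ((r+2).choose j : ℝ) ≠ 0 := by
      exact Nat.cast_ne_zero.mpr (Nat.choose_pos (by omega : j ≤ r + 2)).ne'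
    exact (mul_eq_zero.mp h1).resolve_right h2
  apply hlam1
  have hβ : β = r + 2 - α := by omega
  rw [hβ]
  exact hcz α (by omega)

lemma span_pair_eq : ({X 0, X 1} : Set PS) = X '' {0, 1} := by
  rw [Set.image_insert_eq, Set.image_singleton]

lemma supp_xy {G : PS} (hvan : G ∈ (Ideal.span {X 0, X 1} : Ideal PS)) :
    ∀ m ∈ G.support, m 0 ≠ 0 ∨ m 1 ≠ 0 := by
  rw [span_pair_eq] at hvan
  intro m hm
  obtain ⟨i, hi, hne⟩ := mem_ideal_span_X_image.mp hvan m hm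
  rcases hi with rfl | rfl
  · exact Or.inl hne
  · exact Or.inr hne

lemma n_pos {n : ℕ} {G : PS} (hG : G.IsHomogeneous n)
    (hvan : G ∈ (Ideal.span {X 0, X 1} : Ideal PS)) (hLne : zCoeff G (n-1) ≠ 0) :
    1 ≤ n := by
  by_contra hn
  have hn0 : n = 0 := by omega
  subst hn0
  have : G = 0 := by
    ext m
    rw [coeff_zero]
    by_contra hc
    have hm : m ∈ G.support := mem_support_iff.mpr hc
    have hdeg : m.degree = 0 := by
      rw [Finsupp.degree_eq_weight_one]; exact hG (mem_support_iff.mp hm)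
    have hz : m = 0 := (Finsupp.degree_eq_zero_iff m).mp hdeg
    rcases supp_xy hvan m hm with h | h <;> simp [hz] at h
  apply hLne
  rw [zCoeff, this]
  simp

lemma supp_z_part {n : ℕ} {G : PS} (hG : G.IsHomogeneous n)
    (hvan : G ∈ (Ideal.span {X 0, X 1} : Ideal PS)) (hn : 1 ≤ n) :
    ∀ m ∈ G.support, m 2 = n - 1 →
      m = Finsupp.single 2 (n-1) + Finsupp.single 0 1 ∨
      m = Finsupp.single 2 (n-1) + Finsupp.single 1 1 := by
  intro m hm hm2
  have hdeg : m 0 + m 1 + m 2 = n := by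
    rw [← deg3, Finsupp.degree_eq_weight_one]; exact hG (mem_support_iff.mp hm)
  have hxy : m 0 ≠ 0 ∨ m 1 ≠ 0 := supp_xy hvan m hm
  have hsum : m 0 + m 1 = 1 := by omega
  have h01 : (m 0 = 1 ∧ m 1 = 0) ∨ (m 0 = 0 ∧ m 1 = 1) := by omega
  rcases h01 with ⟨h0, h1⟩ | ⟨h0, h1⟩
  · left; ext j; fin_cases j <;>
      simp [Finsupp.single_apply, h0, h1, hm2]
  · right; ext j; fin_cases j <;>
      simp [Finsupp.single_apply, h0, h1, hm2]

lemma lin_rep {n : ℕ} {G : PS} (hG : G.IsHomogeneous n)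
    (hvan : G ∈ (Ideal.span {X 0, X 1} : Ideal PS)) (hn : 1 ≤ n) :
    ∃ a b : ℝ, zCoeff G (n-1) = C a * X 0 + C b * X 1 := by
  classical
  set s : Fin 3 →₀ ℕ := Finsupp.single 2 (n-1) with hs
  set u := s + Finsupp.single 0 1 with hu
  set v := s + Finsupp.single 1 1 with hv
  refine ⟨coeff u G, coeff v G, ?_⟩
  have huv : u ≠ v := by
    intro h
    have := DFunLike.congr_fun h 0
    simp [hu, hv, hs, Finsupp.single_apply] at this
  have hsub : G.support.filter (fun m => m 2 = n - 1) ⊆ {u, v} := by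
    intro m hm
    rw [Finset.mem_filter] at hm
    rcases supp_z_part hG hvan hn m hm.1 hm.2 with h | h <;>
      simp [h, hu, hv, hs]
  have hzero : ∀ m ∈ ({u, v} : Finset (Fin 3 →₀ ℕ)),
      m ∉ G.support.filter (fun m => m 2 = n - 1) →
      (monomial (m - s) (coeff m G) : PS) = 0 := by
    intro m hmuv hmf
    have hm2 : m 2 = n - 1 := by
      rcases Finset.mem_insert.mp hmuv with rfl | hmv
      · simp [hu, hs, Finsupp.single_apply]
      · rw [Finset.mem_singleton.mp hmv]
        simp [hv, hs, Finsupp.single_apply]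
    have : m ∉ G.support := by
      intro hc; exact hmf (Finset.mem_filter.mpr ⟨hc, hm2⟩)
    rw [notMem_support_iff.mp this, map_zero]
  have hsum := Finset.sum_subset hsub hzero
  rw [zCoeff, ← hs, hsum, Finset.sum_pair huv]
  have hu' : u - s = Finsupp.single 0 1 := by
    ext j; fin_cases j <;> simp [hu, hs, Finsupp.single_apply]
  have hv' : v - s = Finsupp.single 1 1 := by
    ext j; fin_cases j <;> simp [hv, hs, Finsupp.single_apply]
  rw [hu', hv']
  rw [X, X, C_mul_monomial, C_mul_monomial, mul_one, mul_one]

lemma mono_factor (m e : Fin 3 →₀ ℕ) (h : ∀ j, e j ≤ m j) (c : ℝ) :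
    (monomial m c : PS) = monomial (m - e) c * monomial e 1 := by
  have hme : m - e + e = m := by
    ext j
    simp only [Finsupp.coe_add, Finsupp.coe_tsub, Pi.add_apply, Pi.sub_apply]
    have := h j
    omega
  rw [monomial_mul, mul_one, hme]

lemma mono_mem_K2 (m : Fin 3 →₀ ℕ) (c : ℝ) (h : 2 ≤ m 0 + m 1) :
    (monomial m c : PS) ∈ (Ideal.span {X 0, X 1} : Ideal PS) ^ 2 := by
  have hX0 : (X 0 : PS) ∈ (Ideal.span {X 0, X 1} : Ideal PS) :=
    Ideal.subset_span (Set.mem_insert _ _)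
  have hX1 : (X 1 : PS) ∈ (Ideal.span {X 0, X 1} : Ideal PS) :=
    Ideal.subset_span (Set.mem_insert_of_mem _ rfl)
  by_cases h0 : 2 ≤ m 0
  · rw [mono_factor m (Finsupp.single 0 2)
      (fun j => by fin_cases j <;> simp [Finsupp.single_apply] <;> omega) c]
    refine Ideal.mul_mem_left _ _ ?_
    rw [← X_pow_eq_monomial]
    exact Ideal.pow_mem_pow hX0 2
  · by_cases h1 : 2 ≤ m 1
    · rw [mono_factor m (Finsupp.single 1 2)
        (fun j => by fin_cases j <;> simp [Finsupp.single_apply] <;> omega) c]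
      refine Ideal.mul_mem_left _ _ ?_
      rw [← X_pow_eq_monomial]
      exact Ideal.pow_mem_pow hX1 2
    · have hm0 : m 0 = 1 := by omega
      have hm1 : m 1 = 1 := by omega
      rw [mono_factor m (Finsupp.single 0 1 + Finsupp.single 1 1)
        (fun j => by fin_cases j <;> simp [Finsupp.single_apply] <;> omega) c]
      refine Ideal.mul_mem_left _ _ ?_
      have : (monomial (Finsupp.single 0 1 + Finsupp.single 1 1) (1:ℝ) : PS)
          = X 0 * X 1 := by
        rw [X, X, monomial_mul, one_mul]
      rw [this, sq]
      exact Ideal.mul_mem_mul hX0 hX1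

lemma H_mem {n : ℕ} {G : PS} (hG : G.IsHomogeneous n)
    (hvan : G ∈ (Ideal.span {X 0, X 1} : Ideal PS)) (hn : 1 ≤ n) :
    G - zCoeff G (n-1) * X 2 ^ (n-1) ∈ (Ideal.span {X 0, X 1} : Ideal PS) ^ 2 := by
  classical
  have hzc : zCoeff G (n-1) * X 2 ^ (n-1)
      = ∑ m ∈ G.support.filter (fun m => m 2 = n - 1), monomial m (coeff m G) := by
    rw [zCoeff, Finset.sum_mul]
    refine Finset.sum_congr rfl fun m hm => ?_
    rw [Finset.mem_filter] at hm
    obtain ⟨hm1, hm2⟩ := hm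
    rw [X_pow_eq_monomial, monomial_mul, mul_one]
    have hme : m - Finsupp.single 2 (n-1) + Finsupp.single 2 (n-1) = m := by
      ext j
      simp only [Finsupp.coe_add, Finsupp.coe_tsub, Pi.add_apply, Pi.sub_apply]
      fin_cases j <;> simp [Finsupp.single_apply] <;> omega
    rw [hme]
  have hG_sum := G.support_sum_monomial_coeff
  have hsplit := Finset.sum_filter_add_sum_filter_not G.support
    (fun m => m 2 = n - 1) (fun m => (monomial m (coeff m G) : PS))
  have hH : G - zCoeff G (n-1) * X 2 ^ (n-1)
      = ∑ m ∈ G.support.filter (fun m => ¬ m 2 = n - 1), monomial m (coeff m G) := by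
    rw [hzc]
    nth_rewrite 1 [← hG_sum]
    rw [← hsplit]
    ring
  rw [hH]
  refine Ideal.sum_mem _ fun m hm => ?_
  rw [Finset.mem_filter] at hm
  have hdeg : m 0 + m 1 + m 2 = n := by
    rw [← deg3, Finsupp.degree_eq_weight_one]; exact hG (mem_support_iff.mp hm.1)
  have hxy : m 0 ≠ 0 ∨ m 1 ≠ 0 := supp_xy hvan m hm.1
  have h2 : 2 ≤ m 0 + m 1 := by
    have hm2 : m 2 ≠ n - 1 := hm.2
    omega
  exact mono_mem_K2 m _ h2

lemma Kpow_le (d : ℕ) :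
    (Ideal.span {X 0, X 1} : Ideal PS) ^ d ≤
      Ideal.span {p : PS | ∃ a b : ℕ, a + b = d ∧ p = X 0 ^ a * X 1 ^ b} := by
  induction d with
  | zero =>
      intro p _
      have h1 : (1 : PS) ∈ Ideal.span {p : PS | ∃ a b : ℕ, a + b = 0 ∧ p = X 0 ^ a * X 1 ^ b} :=
        Ideal.subset_span ⟨0, 0, rfl, by simp⟩
      simpa using Ideal.mul_mem_left _ p h1
  | succ d ih =>
      rw [pow_succ]
      refine le_trans (Ideal.mul_mono_left ih) ?_
      rw [Ideal.span_mul_span']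
      refine Ideal.span_le.mpr ?_
      rintro p hp
      obtain ⟨p1, hp1, p2, hp2, rfl⟩ := Set.mem_mul.mp hp
      obtain ⟨a, b, hab, rfl⟩ := hp1
      simp only [Set.mem_insert_iff, Set.mem_singleton_iff] at hp2
      rcases hp2 with rfl | rfl
      · exact Ideal.subset_span ⟨a+1, b, by omega, by ring⟩
      · exact Ideal.subset_span ⟨a, b+1, by omega, by ring⟩

lemma mingens_eq (N r : ℕ) (f : Fin N → PS) (hf : ∀ i, (f i).IsHomogeneous (r+1)) :
    mingens (Ideal.span (Set.range f)) =
      Module.finrank ℝ (Submodule.span ℝ (Set.range f)) := by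
  set I : Ideal PS := Ideal.span (Set.range f) with hIdef
  set mI : Ideal PS := Ideal.span {X 0, X 1, X 2} * I with hmIdef
  set W : Submodule ℝ PS := Submodule.span ℝ (Set.range f) with hWdef
  set q := (Ideal.Quotient.mkₐ ℝ mI).toLinearMap with hqdef
  have hWI : W ≤ Submodule.restrictScalars ℝ (I : Submodule PS PS) := by
    rw [hWdef, Submodule.span_le]
    rintro _ ⟨i, rfl⟩; exact Ideal.subset_span ⟨i, rfl⟩
  have hsub : Submodule.restrictScalars ℝ (I : Submodule PS PS) ≤
      W ⊔ Submodule.restrictScalars ℝ (mI : Submodule PS PS) := by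
    intro p hp
    refine Submodule.span_induction ?_ ?_ ?_ ?_ hp
    · rintro _ ⟨i, rfl⟩
      exact Submodule.mem_sup_left (Submodule.subset_span ⟨i, rfl⟩)
    · exact Submodule.zero_mem _
    · intro a b _ _ iha ihb; exact Submodule.add_mem _ iha ihb
    · intro a x hx ih
      obtain ⟨w, hw, v, hv, rfl⟩ := Submodule.mem_sup.mp ih
      have h1 : a • (w + v) = (constantCoeff a) • w + ((a - C (constantCoeff a)) * w + a * v) := by
        simp only [smul_eq_mul, MvPolynomial.smul_eq_C_mul]; ring
      rw [h1]
      refine Submodule.add_mem _ (Submodule.mem_sup_left (Submodule.smul_mem _ _ hw)) ?_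
      refine Submodule.mem_sup_right (Submodule.add_mem _ ?_ ?_)
      · exact Ideal.mul_mem_mul (sub_C_mem_m a) (hWI hw)
      · exact Ideal.mul_mem_left _ _ hv
  have hker : ∀ x ∈ W, q x = 0 → x = 0 := by
    intro x hxW hqx
    have hxmI : x ∈ mI := by
      rwa [hqdef, AlgHom.toLinearMap_apply, Ideal.Quotient.mkₐ_eq_mk,
        Ideal.Quotient.eq_zero_iff_mem] at hqx
    have hhom : x ∈ homogeneousSubmodule (Fin 3) ℝ (r+1) := by
      refine Submodule.span_le.mpr ?_ hxW
      rintro _ ⟨i, rfl⟩; exact hf i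
    ext d
    by_cases hd : d.degree ≤ r + 1
    · exact (coeff_low_zero_mI f r hf hxmI d hd).trans (by simp)
    · rw [coeff_zero]
      exact IsHomogeneous.coeff_eq_zero hhom (by omega)
  -- image equality
  have himg : Submodule.map q (Submodule.restrictScalars ℝ (I : Submodule PS PS)) =
      Submodule.map q W := by
    apply le_antisymm
    · refine le_trans (Submodule.map_mono hsub) ?_
      rw [Submodule.map_sup]
      have hb : Submodule.map q (Submodule.restrictScalars ℝ (mI : Submodule PS PS)) = ⊥ := by
        rw [eq_bot_iff]
        rintro _ ⟨x, hx, rfl⟩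
        show q x = 0
        rw [hqdef, AlgHom.toLinearMap_apply, Ideal.Quotient.mkₐ_eq_mk,
          Ideal.Quotient.eq_zero_iff_mem]
        exact hx
      rw [hb, sup_bot_eq]
    · exact Submodule.map_mono hWI
  have : FiniteDimensional ℝ ↥W := FiniteDimensional.span_of_finite ℝ (Set.finite_range f)
  have hinj : Function.Injective (q.comp W.subtype) := by
    rw [← LinearMap.ker_eq_bot, eq_bot_iff]
    rintro ⟨x, hxW⟩ hx
    simp only [LinearMap.mem_ker, LinearMap.comp_apply, Submodule.subtype_apply] at hx
    exact Subtype.ext (hker x hxW hx)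
  have hrange : LinearMap.range (q.comp W.subtype) = Submodule.map q W := by
    rw [LinearMap.range_comp, Submodule.range_subtype]
  have := LinearMap.finrank_range_of_inj hinj
  rw [hrange] at this
  rw [mingens, himg, this]


end LowPowersAux

theorem low_powers_containment
    (r N : ℕ) (n : Fin N → ℕ)
    (G : Fin N → PS)
    (hhom : ∀ i, (G i).IsHomogeneous (n i))
    (hvan : ∀ i, G i ∈ (Ideal.span {X 0, X 1} : Ideal PS))
    (L : Fin N → PS) (hL : ∀ i, L i = zCoeff (G i) (n i - 1))
    (hLne : ∀ i, L i ≠ 0)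
    (I : Ideal PS)
    (hI : I = Ideal.span (Set.range fun i => L i ^ (r + 1)))
    (t : ℕ) (hmin : mingens I = t) (h2t : r + 3 ≤ 2 * t) :
    (∀ i, G i ^ (r + 1) ∈ I) ∧
      Ideal.span (Set.range fun i => G i ^ (r + 1)) ≤ I := by
  classical
  have hn1 : ∀ i, 1 ≤ n i := by
    intro i
    refine LowPowersAux.n_pos (hhom i) (hvan i) ?_
    rw [← hL i]; exact hLne i
  have hrep : ∀ i, ∃ a b : ℝ, L i = C a * X 0 + C b * X 1 := by
    intro i; rw [hL i]; exact LowPowersAux.lin_rep (hhom i) (hvan i) (hn1 i)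
  choose ca cb hcab using hrep
  have hLhom : ∀ i, (L i).IsHomogeneous 1 := by
    intro i; rw [hcab i]
    exact ((isHomogeneous_X ℝ 0).C_mul (ca i)).add ((isHomogeneous_X ℝ 1).C_mul (cb i))
  have hPhom : ∀ i, ((L i) ^ (r+1)).IsHomogeneous (r+1) := by
    intro i
    have h := (hLhom i).pow (r+1)
    rwa [one_mul] at h
  have ht : Module.finrank ℝ (Submodule.span ℝ (Set.range fun i => L i ^ (r+1))) = t := by
    rw [← hmin, hI, LowPowersAux.mingens_eq N r _ hPhom]
  obtain ⟨bset, hbsub, hbspan, hbli⟩ :=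
    exists_linearIndependent ℝ (Set.range fun i => L i ^ (r+1))
  have hbfin : bset.Finite := (Set.finite_range _).subset hbsub
  have hbft : Fintype bset := hbfin.fintype
  have hcard : Fintype.card bset = t := by
    rw [← Set.toFinset_card, ← ht, ← hbspan, finrank_span_set_eq_card hbli]
  have hk : r + 3 ≤ 2 * Fintype.card bset := by rw [hcard]; exact h2t
  have hidx : ∀ x : bset, ∃ i : Fin N, L i ^ (r+1) = (x : PS) := fun x => hbsub x.2
  choose idx hidx' using hidx
  have hne : ∀ x : bset, ¬(ca (idx x) = 0 ∧ cb (idx x) = 0) := by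
    rintro x ⟨h1, h2⟩
    apply hLne (idx x)
    rw [hcab (idx x), h1, h2]
    simp
  have hdet : ∀ x y : bset, x ≠ y → ca (idx x) * cb (idx y) ≠ ca (idx y) * cb (idx x) := by
    intro x y hxy heq
    have hprop : ∃ c : ℝ, ca (idx y) = c * ca (idx x) ∧ cb (idx y) = c * cb (idx x) := by
      by_cases hax : ca (idx x) = 0
      · have hbx : cb (idx x) ≠ 0 := fun h => hne x ⟨hax, h⟩
        refine ⟨cb (idx y) / cb (idx x), ?_, ?_⟩
        · have h0 : ca (idx y) * cb (idx x) = 0 := by rw [← heq, hax, zero_mul]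
          rw [(mul_eq_zero.mp h0).resolve_right hbx, hax, mul_zero]
        · field_simp
      · refine ⟨ca (idx y) / ca (idx x), ?_, ?_⟩
        · field_simp
        · rw [div_mul_eq_mul_div, eq_div_iff hax]
          linear_combination heq
    obtain ⟨c, e1, e2⟩ := hprop
    have hc : L (idx y) = c • L (idx x) := by
      rw [hcab (idx y), hcab (idx x), smul_add, ← smul_mul_assoc, ← smul_mul_assoc,
        MvPolynomial.smul_eq_C_mul, MvPolynomial.smul_eq_C_mul, ← map_mul, ← map_mul,
        ← e1, ← e2]
    have hy : (y : PS) = c ^ (r+1) • (x : PS) := by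
      rw [← hidx' y, ← hidx' x, hc, smul_pow]
    exact LowPowersAux.li_no_smul hbli hxy _ hy
  have hmono : ∀ α β : ℕ, α + β = r + 2 → (X 0 : PS) ^ α * X 1 ^ β ∈ I := by
    intro α β hab
    have hcore := LowPowersAux.core r (fun x : bset => ca (idx x)) (fun x => cb (idx x))
      hne hdet hk α β hab
    have hsle : Submodule.span ℝ
        ((Set.range fun x : bset => (C (ca (idx x)) * X 0 + C (cb (idx x)) * X 1 : PS) ^ (r+1) * X 0) ∪
         (Set.range fun x : bset => (C (ca (idx x)) * X 0 + C (cb (idx x)) * X 1 : PS) ^ (r+1) * X 1)) ≤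
        Submodule.restrictScalars ℝ (I : Submodule PS PS) := by
      rw [Submodule.span_le]
      rintro p (⟨x, rfl⟩ | ⟨x, rfl⟩) <;>
      · show _ ∈ I
        refine Ideal.mul_mem_right _ _ ?_
        rw [← hcab (idx x)]
        rw [hI]
        exact Ideal.subset_span ⟨idx x, rfl⟩
    exact hsle hcore
  have hKle : ∀ d : ℕ, r + 2 ≤ d → (Ideal.span {X 0, X 1} : Ideal PS) ^ d ≤ I := by
    intro d hd
    refine le_trans (Ideal.pow_le_pow_right hd) (le_trans (LowPowersAux.Kpow_le (r+2)) ?_)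
    rw [Ideal.span_le]
    rintro p ⟨a', b', hab', rfl⟩
    exact hmono a' b' hab'
  have main : ∀ i, G i ^ (r+1) ∈ I := by
    intro i
    have hLpow : L i ^ (r+1) ∈ I := by
      rw [hI]; exact Ideal.subset_span ⟨i, rfl⟩
    have hHmem : G i - L i * X 2 ^ (n i - 1) ∈ (Ideal.span {X 0, X 1} : Ideal PS) ^ 2 := by
      rw [hL i]; exact LowPowersAux.H_mem (hhom i) (hvan i) (hn1 i)
    have hLK : L i ∈ (Ideal.span {X 0, X 1} : Ideal PS) := by
      rw [hcab i]
      exact Ideal.add_mem _ (Ideal.mul_mem_left _ _ (Ideal.subset_span (Set.mem_insert _ _)))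
        (Ideal.mul_mem_left _ _ (Ideal.subset_span (Set.mem_insert_of_mem _ rfl)))
    have hAK : L i * X 2 ^ (n i - 1) ∈ (Ideal.span {X 0, X 1} : Ideal PS) :=
      Ideal.mul_mem_right _ _ hLK
    have hGsum : G i = L i * X 2 ^ (n i - 1) + (G i - L i * X 2 ^ (n i - 1)) := by ring
    rw [hGsum, add_pow]
    refine Ideal.sum_mem _ fun m hm => ?_
    rw [Finset.mem_range] at hm
    by_cases hmr : m = r + 1
    · subst hmr
      refine Ideal.mul_mem_right _ _ (Ideal.mul_mem_right _ _ ?_)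
      rw [mul_pow]
      exact Ideal.mul_mem_right _ _ hLpow
    · refine Ideal.mul_mem_right _ _ ?_
      have h1 : (L i * X 2 ^ (n i - 1)) ^ m ∈ (Ideal.span {X 0, X 1} : Ideal PS) ^ m :=
        Ideal.pow_mem_pow hAK m
      have h2 : (G i - L i * X 2 ^ (n i - 1)) ^ (r + 1 - m) ∈
          ((Ideal.span {X 0, X 1} : Ideal PS) ^ 2) ^ (r + 1 - m) :=
        Ideal.pow_mem_pow hHmem _
      rw [← pow_mul] at h2
      have h3 := Ideal.mul_mem_mul h1 h2
      rw [← pow_add] at h3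
      exact hKle (m + 2 * (r + 1 - m)) (by omega) h3
  exact ⟨main, Ideal.span_le.mpr (by rintro p ⟨i, rfl⟩; exact main i)⟩

end
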